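/- If q is a biquaternion with q q^# = 1 and p is an Hermitian biquaternion (p^* = p^#), then p' = q p q^{#*} is again Hermitian and satisfies N(p') = N(p), i.e., the Minkowski norm t² - x² - y² - z² is preserved. -/

import Mathlib

open Quaternion

/-- Componentwise complex conjugation on biquaternions. -/
def bqConj (a : ℍ[ℂ]) : ℍ[ℂ] :=
  ⟨starRingEnd ℂ a.re, starRingEnd ℂ a.imI, starRingEnd ℂ a.imJ, starRingEnd ℂ a.imK⟩

@[simp] lemma bqConj_re (a : ℍ[ℂ]) : (bqConj a).re = starRingEnd ℂ a.re := rfl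
@[simp] lemma bqConj_imI (a : ℍ[ℂ]) : (bqConj a).imI = starRingEnd ℂ a.imI := rfl
@[simp] lemma bqConj_imJ (a : ℍ[ℂ]) : (bqConj a).imJ = starRingEnd ℂ a.imJ := rfl
@[simp] lemma bqConj_imK (a : ℍ[ℂ]) : (bqConj a).imK = starRingEnd ℂ a.imK := rfl

lemma bqConj_mul (a b : ℍ[ℂ]) : bqConj (a * b) = bqConj a * bqConj b := by
  ext <;> simp [Quaternion.re_mul, Quaternion.imI_mul, Quaternion.imJ_mul,
    Quaternion.imK_mul, map_add, map_sub, map_mul]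

lemma bqConj_star (a : ℍ[ℂ]) : bqConj (star a) = star (bqConj a) := by
  ext <;> simp

lemma bqConj_bqConj (a : ℍ[ℂ]) : bqConj (bqConj a) = a := by
  ext <;> simp [bqConj]

lemma bqConj_one : bqConj (1 : ℍ[ℂ]) = 1 := by
  ext <;> simp [bqConj]

lemma mul_star_central (p q : ℍ[ℂ]) : q * (p * star p) * star q = (p * star p) * (q * star q) := by
  rw [Quaternion.mul_star_eq_coe p]
  ext <;> simp [Quaternion.re_mul, Quaternion.imI_mul, Quaternion.imJ_mul, Quaternion.imK_mul] <;>
    ring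

/-- If `q` is a biquaternion with `q q^# = 1` and `p` is Hermitian (`p^* = p^#`),
then `p' = q p q^{#*}` is again Hermitian and `p' p'^# = p p^#`, i.e. the
Minkowski norm is preserved. -/
theorem biquaternion_lorentz (q p : ℍ[ℂ]) (hq : q * star q = 1) (hp : bqConj p = star p) :
    bqConj (q * p * bqConj (star q)) = star (q * p * bqConj (star q)) ∧
    (q * p * bqConj (star q)) * star (q * p * bqConj (star q)) = p * star p := by
  have hq' : star q * q = 1 := by rw [star_comm_self']; exact hq
  constructor
  · rw [bqConj_mul, bqConj_mul, bqConj_bqConj, hp, star_mul, star_mul,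
      ← bqConj_star, star_star, mul_assoc]
  · have : star (bqConj (star q)) = bqConj q := by rw [← bqConj_star, star_star]
    rw [star_mul, star_mul, this]
    calc q * p * bqConj (star q) * (bqConj q * (star p * star q))
        = q * (p * (bqConj (star q) * bqConj q) * star p) * star q := by noncomm_ring
      _ = q * (p * star p) * star q := by
          rw [← bqConj_mul, hq', bqConj_one, mul_one]
      _ = p * star p := by rw [mul_star_central, hq, mul_one]
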